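/- Let p be an odd prime and t ≥ 2 an integer. Set n = p^t and suppose d = n^2 + 1 is squarefree with d ≡ 2 (mod 4). If the class number of Q(√d) equals 4, then the ideal class group of Q(√d) is isomorphic to Z/4Z (i.e., it is cyclic of order 4). -/

import Mathlib

open Polynomial NumberField
open scoped nonZeroDivisors

/-- Key descent lemma: the Pell-type equation `x² - (N²+1) y² = ±P²` has no
primitive solution when `3 ≤ P`, `P² ≤ N`. -/
lemma no_primitive_solution (P N : ℤ) (hP : 3 ≤ P) (hPN : P^2 ≤ N) :
    ∀ y : ℕ, ∀ x c : ℤ, (c = P^2 ∨ c = -P^2) → IsCoprime x (y : ℤ) →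
      x^2 - (N^2+1) * (y:ℤ)^2 = c → False := by
  have hN : 9 ≤ N := le_trans (by nlinarith) hPN
  intro y
  induction y using Nat.strong_induction_on with
  | _ y IH =>
  intro x c hc hcop heq
  -- reduce to x ≥ 0
  wlog hx0 : 0 ≤ x generalizing x
  · exact this (-x) ((IsCoprime.neg_left_iff _ _).mpr hcop) (by rwa [neg_sq]) (by linarith)
  rcases Nat.eq_zero_or_pos y with hy0 | hy0
  · subst hy0
    simp only [Nat.cast_zero] at heq hcop
    have hxu : IsUnit x := (isCoprime_zero_right).mp hcop
    have hx1 : x = 1 ∨ x = -1 := Int.isUnit_iff.mp hxu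
    rcases hc with rfl | rfl <;> rcases hx1 with rfl | rfl <;> nlinarith
  -- y ≥ 1
  have hy1 : (1:ℤ) ≤ (y:ℤ) := by exact_mod_cast hy0
  have hy2 : (1:ℤ) ≤ (y:ℤ)^2 := by nlinarith
  have hNy : N ≤ N * y := by nlinarith
  have hx1 : 1 ≤ x := by
    rcases lt_or_ge x 1 with h | h
    · have hx : x = 0 := by omega
      subst hx
      rcases hc with rfl | rfl <;> nlinarith
    · exact h
  rcases hc with rfl | rfl
  · -- c = P²  : x² = (N²+1)y² + P², descend to -P²
    have hgt : (N:ℤ) * y < x := by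
      by_contra h
      push_neg at h
      have := pow_le_pow_left₀ hx0 h 2
      nlinarith [sq_nonneg P]
    set y' := x - N * y with hy'
    have hy'pos : 1 ≤ y' := by omega
    have hy'lt : y' < y := by
      by_contra h
      push_neg at h
      have hx' : (N+1) * y ≤ x := by linarith
      have := pow_le_pow_left₀ (by positivity) hx' 2
      nlinarith [mul_nonneg (by linarith : (0:ℤ) ≤ N) (by linarith : (0:ℤ) ≤ (y:ℤ)^2 - 1)]
    have heq' : (x*N - y*(N^2+1))^2 - (N^2+1) * y'^2 = -P^2 := by
      rw [hy']; linear_combination -heq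
    have hcop' : IsCoprime (x*N - y*(N^2+1)) y' := by
      obtain ⟨u, v, huv⟩ := hcop
      exact ⟨-u*N - v, u*(N^2+1) + v*N, by rw [hy']; linear_combination huv⟩
    exact IH y'.toNat (by omega) (x*N - y*(N^2+1)) (-P^2) (Or.inr rfl)
      (by rwa [Int.toNat_of_nonneg (by omega)]) (by rw [Int.toNat_of_nonneg (by omega)]; exact heq')
  · -- c = -P²
    rcases lt_trichotomy (y:ℤ) P with hyP | hyP | hyP
    · -- y < P : squeeze between consecutive squares
      have hyP2 : (y:ℤ)^2 < P^2 := by nlinarith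
      have h1 : (N*y - 1)^2 < x^2 := by nlinarith
      have h2 : x^2 < (N*y)^2 := by nlinarith
      have hb1 : N*y - 1 < x := lt_of_pow_lt_pow_left₀ 2 hx0 h1
      have hb2 : x < N*y := lt_of_pow_lt_pow_left₀ 2 (by positivity) h2
      have hb1' : N*y ≤ x := by linarith [Int.lt_iff_add_one_le.mp hb1]
      linarith
    · -- y = P : x = N*y, contradicting coprimality
      have hx2 : (x - N*y) * (x + N*y) = 0 := by
        linear_combination heq + ((y:ℤ) + P) * hyP
      rcases mul_eq_zero.mp hx2 with h | h
      · have hx : x = N * y := by linarith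
        obtain ⟨u, v, huv⟩ := hcop
        have hdvd : (P:ℤ) ∣ 1 := ⟨u*N + v, by rw [← huv, hx, ← hyP]; ring⟩
        have := Int.le_of_dvd one_pos hdvd
        omega
      · linarith
    · -- y > P : descend to +P²
      have hyP2 : P^2 < (y:ℤ)^2 := by nlinarith
      have hgt : (N:ℤ) * y < x := by
        by_contra h
        push_neg at h
        have := pow_le_pow_left₀ hx0 h 2
        nlinarith
      set y' := x - N * y with hy'
      have hy'pos : 1 ≤ y' := by omega
      have hy'lt : y' < y := by
        by_contra h
        push_neg at h
        have hx' : (N+1) * y ≤ x := by linarith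
        have := pow_le_pow_left₀ (by positivity) hx' 2
        nlinarith [mul_nonneg (by linarith : (0:ℤ) ≤ N) (by linarith : (0:ℤ) ≤ (y:ℤ)^2 - 1)]
      have heq' : (x*N - y*(N^2+1))^2 - (N^2+1) * y'^2 = P^2 := by
        rw [hy']; linear_combination -heq
      have hcop' : IsCoprime (x*N - y*(N^2+1)) y' := by
        obtain ⟨u, v, huv⟩ := hcop
        exact ⟨-u*N - v, u*(N^2+1) + v*N, by rw [hy']; linear_combination huv⟩
      exact IH y'.toNat (by omega) (x*N - y*(N^2+1)) (P^2) (Or.inl rfl)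
        (by rwa [Int.toNat_of_nonneg (by omega)]) (by rw [Int.toNat_of_nonneg (by omega)]; exact heq')

set_option maxHeartbeats 1000000 in
set_option synthInstance.maxHeartbeats 200000 in
/-- If `n = p^t` with `p` an odd prime and `t ≥ 2`, `d = n^2 + 1` is
squarefree with `d ≡ 2 (mod 4)`, and the class number of `ℚ(√d)` is `4`, then
the class group of `ℚ(√d)` is cyclic of order `4`. -/
theorem class_group_cyclic_of_odd_prime_pow
    (p : ℕ) (hp : p.Prime) (hodd : p ≠ 2) (t : ℕ) (ht : 2 ≤ t)
    (n : ℕ) (hn : n = p ^ t) (d : ℕ) (hd : d = n ^ 2 + 1)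
    (hsf : Squarefree d) (hmod : d % 4 = 2)
    (K : Type) [Field K] [NumberField K]
    (hdeg : Module.finrank ℚ K = 2) (α : K) (hα : α ^ 2 = (d : K))
    (hcl : NumberField.classNumber K = 4) :
    Nonempty (ClassGroup (NumberField.RingOfIntegers K) ≃* Multiplicative (ZMod 4)) := by
  classical
  have hp2 := hp.two_le
  have hp3 : 3 ≤ p := by omega
  have hnp : p ^ 2 ≤ n := by rw [hn]; exact Nat.pow_le_pow_right (by omega) ht
  have hn9 : 9 ≤ n := le_trans (by nlinarith) hnp
  have hd82 : 82 ≤ d := by rw [hd]; nlinarith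
  have hdZ : (d:ℤ) = (n:ℤ)^2 + 1 := by exact_mod_cast hd
  have hα0 : α ≠ 0 := by
    intro h
    rw [h] at hα
    have : ((d:ℕ):K) = 0 := by rw [← hα]; ring
    have : (d:ℕ) = 0 := by exact_mod_cast this
    omega
  -- d is not the square of a rational
  have hdsq : ∀ q : ℚ, q^2 ≠ (d:ℚ) := by
    intro q hq
    have hint : IsIntegral ℤ q := by
      refine ⟨X^2 - C (d:ℤ), monic_X_pow_sub_C _ two_ne_zero, ?_⟩
      simp only [eval₂_sub, eval₂_X_pow, eval₂_C]
      rw [show (algebraMap ℤ ℚ) (d:ℤ) = (d:ℚ) by push_cast; simp, hq, sub_self]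
    obtain ⟨z, hz⟩ := IsIntegrallyClosed.isIntegral_iff.mp hint
    have hz2 : z^2 = (d:ℤ) := by
      have : ((z:ℚ))^2 = (d:ℚ) := by
        rw [show (z:ℚ) = q from by rw [← hz]; simp [algebraMap_int_eq]]; exact hq
      exact_mod_cast this
    have hzu : IsUnit z := (Int.squarefree_natCast.mpr hsf) z ⟨1, by rw [← hz2]; ring⟩
    rcases Int.isUnit_iff.mp hzu with rfl | rfl <;> simp at hz2 <;> omega
  have hrange : α ∉ (algebraMap ℚ K).range := by
    rintro ⟨q, hq⟩
    refine hdsq q ?_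
    have h2 : (algebraMap ℚ K) (q^2) = (algebraMap ℚ K) (d:ℚ) := by
      rw [map_pow, hq, hα, map_natCast]
    exact (algebraMap ℚ K).injective h2
  have hα_int : IsIntegral ℤ α := by
    refine ⟨X^2 - C (d:ℤ), monic_X_pow_sub_C _ two_ne_zero, ?_⟩
    simp only [eval₂_sub, eval₂_X_pow, eval₂_C]
    rw [map_natCast (algebraMap ℤ K) d, hα, sub_self]
  have hQint : IsIntegral ℚ α := hα_int.tower_top
  -- basis {1, α}
  have hli : LinearIndependent ℚ ![(1:K), α] := by
    rw [linearIndependent_fin2]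
    refine ⟨by simpa using hα0, fun a h => ?_⟩
    simp only [Matrix.cons_val_one, Matrix.head_cons, Matrix.cons_val_zero] at h
    have ha : a ≠ 0 := by rintro rfl; simp at h
    refine hrange ⟨a⁻¹, ?_⟩
    rw [Algebra.algebraMap_eq_smul_one, ← h, smul_smul, inv_mul_cancel₀ ha, one_smul]
  have hcard2 : Fintype.card (Fin 2) = Module.finrank ℚ K := by simp [hdeg]
  let B : Module.Basis (Fin 2) ℚ K := basisOfLinearIndependentOfCardEqFinrank hli hcard2
  have hB : ⇑B = ![(1:K), α] := coe_basisOfLinearIndependentOfCardEqFinrank _ _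
  -- minimal polynomial
  have hmono : (X^2 - C (d:ℚ)).Monic := monic_X_pow_sub_C _ two_ne_zero
  have haev : (Polynomial.aeval α) (X^2 - C (d:ℚ)) = 0 := by
    rw [map_sub, map_pow, aeval_X, aeval_C, map_natCast, hα, sub_self]
  have hmp : minpoly ℚ α = X^2 - C (d:ℚ) := by
    refine (eq_of_monic_of_dvd_of_natDegree_le (minpoly.monic hQint) hmono
      (minpoly.dvd ℚ α haev) ?_).symm
    rw [natDegree_X_pow_sub_C]
    exact (minpoly.two_le_natDegree_iff hQint).mpr hrange
  -- conjugation
  let pb : PowerBasis ℚ K :=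
    { gen := α, dim := 2, basis := B,
      basis_eq_pow := by intro i; rw [hB]; fin_cases i <;> simp }
  have hσroot : (Polynomial.aeval (-α)) (minpoly ℚ pb.gen) = 0 := by
    show (Polynomial.aeval (-α)) (minpoly ℚ α) = 0
    rw [hmp, map_sub, map_pow, aeval_X, aeval_C, map_natCast, neg_sq, hα, sub_self]
  let σ : K →ₐ[ℚ] K := pb.lift (-α) hσroot
  have hσα : σ α = -α := pb.lift_gen _ _
  -- the integer α in the ring of integers
  let w : 𝓞 K := ⟨α, hα_int⟩
  have hw : (w : K) = α := rfl
  -- integer coordinates of elements of 𝓞 K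
  have huniqQ : ∀ a b : ℚ, algebraMap ℚ K a + algebraMap ℚ K b * α = 0 → a = 0 ∧ b = 0 := by
    intro a b h
    by_cases hb : b = 0
    · subst hb
      simp only [map_zero, zero_mul, add_zero] at h
      exact ⟨by simpa using (algebraMap ℚ K).injective (by rw [h, map_zero]), rfl⟩
    · exfalso
      refine hrange ⟨-a/b, ?_⟩
      have hbK : algebraMap ℚ K b ≠ 0 := by
        simpa using fun hh => hb ((algebraMap ℚ K).injective (by rw [hh, map_zero]))
      rw [map_div₀, map_neg, div_eq_iff hbK]
      linear_combination -h
  have huniq : ∀ a b : ℤ, (a:K) + (b:K) * α = 0 → a = 0 ∧ b = 0 := by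
    intro a b h
    have := huniqQ a b (by rw [map_intCast, map_intCast]; exact_mod_cast h)
    exact ⟨by exact_mod_cast this.1, by exact_mod_cast this.2⟩
  have hcoords : ∀ x : 𝓞 K, ∃ a b : ℤ, (x:K) = (a:K) + (b:K) * α := by
    intro x
    obtain ⟨q, r, hqr⟩ : ∃ q r : ℚ, (x:K) = algebraMap ℚ K q + algebraMap ℚ K r * α := by
      have hs := B.sum_repr (x:K)
      rw [Fin.sum_univ_two] at hs
      set q := B.repr (x:K) 0 with hqdef
      set r := B.repr (x:K) 1 with hrdef
      refine ⟨q, r, ?_⟩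
      rw [← hs, hB]
      simp [Algebra.smul_def]
    have hxint : IsIntegral ℤ ((x:K)) := RingOfIntegers.isIntegral_coe x
    have hσint : IsIntegral ℤ (σ (x:K)) := map_isIntegral_int σ hxint
    have hσx : σ (x:K) = algebraMap ℚ K q - algebraMap ℚ K r * α := by
      rw [hqr, map_add, map_mul, AlgHom.commutes, AlgHom.commutes, hσα]; ring
    -- trace is an integer
    have htr : (x:K) + σ (x:K) = algebraMap ℚ K (2*q) := by
      rw [hσx, hqr, map_mul]
      have : (algebraMap ℚ K) 2 = 2 := by norm_num
      rw [this]; ring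
    have htr_int : IsIntegral ℤ (2*q : ℚ) := by
      rw [← isIntegral_algebraMap_iff (algebraMap ℚ K).injective, ← htr]
      exact hxint.add hσint
    obtain ⟨u, hu⟩ := IsIntegrallyClosed.isIntegral_iff.mp htr_int
    have huQ : (u:ℚ) = 2*q := by rw [← hu]; simp [algebraMap_int_eq]
    -- norm is an integer
    have hnm : (x:K) * σ (x:K) = algebraMap ℚ K (q^2 - (d:ℚ)*r^2) := by
      rw [hσx, hqr, map_sub, map_pow, map_mul, map_pow, map_natCast]
      linear_combination (-(algebraMap ℚ K r)^2) * hα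
    have hnm_int : IsIntegral ℤ (q^2 - (d:ℚ)*r^2) := by
      rw [← isIntegral_algebraMap_iff (algebraMap ℚ K).injective, ← hnm]
      exact hxint.mul hσint
    obtain ⟨m, hm⟩ := IsIntegrallyClosed.isIntegral_iff.mp hnm_int
    have hmQ : (m:ℚ) = q^2 - (d:ℚ)*r^2 := by rw [← hm]; simp [algebraMap_int_eq]
    -- d*(2r) is an integer
    have hval : ((d:ℚ)*(2*r))^2 = (d:ℚ)*((u:ℚ)^2 - 4*(m:ℚ)) := by
      linear_combination (-(d:ℚ)*((u:ℚ)+2*q)) * huQ + (4*(d:ℚ)) * hmQ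
    have hv_int : IsIntegral ℤ ((d:ℚ)*(2*r)) := by
      refine ⟨X^2 - C ((d:ℤ)*(u^2-4*m)), monic_X_pow_sub_C _ two_ne_zero, ?_⟩
      rw [eval₂_sub, eval₂_X_pow, eval₂_C,
        show (algebraMap ℤ ℚ) ((d:ℤ)*(u^2-4*m)) = (d:ℚ)*((u:ℚ)^2-4*(m:ℚ)) by
          simp only [algebraMap_int_eq, eq_intCast]; push_cast; ring,
        hval, sub_self]
    obtain ⟨v, hv⟩ := IsIntegrallyClosed.isIntegral_iff.mp hv_int
    have hvQ : (v:ℚ) = (d:ℚ)*(2*r) := by rw [← hv]; simp [algebraMap_int_eq]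
    have hv2 : v^2 = (d:ℤ)*(u^2 - 4*m) := by
      have : ((v^2 : ℤ):ℚ) = (((d:ℤ)*(u^2 - 4*m) : ℤ):ℚ) := by
        push_cast
        linear_combination ((v:ℚ) + (d:ℚ)*2*r) * hvQ + (-(d:ℚ)*((u:ℚ)+2*q)) * huQ
          + (4*(d:ℚ)) * hmQ
      exact_mod_cast this
    have hdv : (d:ℤ) ∣ v :=
      ((Int.squarefree_natCast.mpr hsf).dvd_pow_iff_dvd two_ne_zero).mp ⟨u^2-4*m, hv2⟩
    obtain ⟨s, hs⟩ := hdv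
    have hdQ0 : (d:ℚ) ≠ 0 := by positivity
    have hsQ : (s:ℚ) = 2*r := by
      have h1 : (d:ℚ) * (s:ℚ) = (d:ℚ) * (2*r) := by
        rw [← hvQ, hs]; push_cast; ring
      exact mul_left_cancel₀ hdQ0 h1
    -- the key integral relation
    have heq4 : u^2 - (d:ℤ)*s^2 = 4*m := by
      have : ((u^2 - (d:ℤ)*s^2 : ℤ):ℚ) = ((4*m : ℤ):ℚ) := by
        push_cast
        linear_combination ((u:ℚ)+2*q) * huQ + (-(d:ℚ)*((s:ℚ)+2*r)) * hsQ - 4 * hmQ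
      exact_mod_cast this
    -- parity: u and s are even
    have hdeven : Even (d:ℤ) := by
      refine ⟨(d:ℤ)/2, ?_⟩
      omega
    have hueven : Even u := by
      by_contra hodd'
      have hou : Odd u := Int.not_even_iff_odd.mp hodd'
      have : Odd (u^2) := hou.pow
      have heven : Even (u^2) := by
        rw [show u^2 = 4*m + (d:ℤ)*s^2 by linarith]
        exact (even_iff_two_dvd.mpr ⟨2*m, by ring⟩).add (hdeven.mul_right _)
      exact (Int.not_odd_iff_even.mpr heven) this
    obtain ⟨a, ha⟩ := hueven
    have h4ds : (d:ℤ)*s^2 = 4*(a^2 - m) := by linear_combination -heq4 + (u + 2*a)*ha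
    have hseven : Even s := by
      have hd4 : ∃ c : ℤ, (d:ℤ) = 4*c + 2 := ⟨((d:ℤ)-2)/4, by omega⟩
      obtain ⟨c, hc⟩ := hd4
      have h42 : (4:ℤ) ∣ 2*s^2 :=
        ⟨a^2 - m - c*s^2, by linear_combination h4ds - s^2 * hc⟩
      obtain ⟨k, hk⟩ := h42
      have : Even (s^2) := ⟨k, by linarith⟩
      exact (Int.even_pow.mp this).1
    obtain ⟨b, hb⟩ := hseven
    refine ⟨a, b, ?_⟩
    have hqa : q = (a:ℚ) := by
      have h2a : ((2*a : ℤ):ℚ) = 2*q := by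
        rw [show (2*a : ℤ) = u by omega]; exact_mod_cast huQ
      push_cast at h2a
      linarith
    have hrb : r = (b:ℚ) := by
      have h2b : ((2*b : ℤ):ℚ) = 2*r := by
        rw [show (2*b : ℤ) = s by omega]; exact_mod_cast hsQ
      push_cast at h2b
      linarith
    rw [hqr, hqa, hrb, map_intCast, map_intCast]
  -- conjugation on the ring of integers
  let σR : (𝓞 K) →+* (𝓞 K) := RingOfIntegers.mapRingHom σ
  have hσRcoe : ∀ x : 𝓞 K, ((σR x : 𝓞 K) : K) = σ (x:K) := fun _ => rfl
  have hσRw : σR w = -w := by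
    apply RingOfIntegers.ext
    rw [hσRcoe, hw, hσα, show ((-w : 𝓞 K) : K) = -(w:K) from map_neg (algebraMap (𝓞 K) K) w, hw]
  have hcI : ∀ z : ℤ, ((z : 𝓞 K) : K) = (z:K) := fun z => map_intCast (algebraMap _ K) z
  have hcN : ((p : 𝓞 K) : K) = (p:K) := map_natCast (algebraMap _ K) p
  -- mul-conjugate formula
  have hmulconj : ∀ x y : ℤ, ((x:𝓞 K) + (y:𝓞 K)*w) * ((x:𝓞 K) - (y:𝓞 K)*w)
      = ((x^2 - (d:ℤ)*y^2 : ℤ) : 𝓞 K) := by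
    intro x y
    apply RingOfIntegers.ext
    simp only [map_mul, map_add, map_sub, map_intCast, hw]
    push_cast
    linear_combination (-(y:K)^2) * hα
  -- the two ideals above p
  set P1 : Ideal (𝓞 K) := Ideal.span {(p:𝓞 K), w - 1} with hP1def
  set P2 : Ideal (𝓞 K) := Ideal.span {(p:𝓞 K), w + 1} with hP2def
  obtain ⟨j, hj⟩ := hp.odd_of_ne_two hodd
  have hjZ : (p:ℤ) - 2*(j:ℤ) = 1 := by
    have : (p:ℤ) = 2*(j:ℤ) + 1 := by exact_mod_cast hj
    linarith
  have hone : ((p:𝓞 K)) - 2*((j:ℤ):𝓞 K) = 1 := by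
    apply RingOfIntegers.ext
    simp only [map_sub, map_mul, map_one, map_intCast, map_natCast, map_ofNat]
    exact_mod_cast hjZ
  have hp_mem1 : (p:𝓞 K) ∈ P1 := Ideal.subset_span (by simp)
  have hp_mem2 : (p:𝓞 K) ∈ P2 := Ideal.subset_span (by simp)
  have hw_mem1 : w - 1 ∈ P1 := Ideal.subset_span (by simp)
  have hw_mem2 : w + 1 ∈ P2 := Ideal.subset_span (by simp)
  have htop : P1 ⊔ P2 = ⊤ := by
    rw [Ideal.eq_top_iff_one]
    have h1 : ((p:𝓞 K) + ((j:ℤ):𝓞 K)*(w-1)) ∈ P1 :=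
      Ideal.add_mem _ hp_mem1 (Ideal.mul_mem_left _ _ hw_mem1)
    have h2 : (-((j:ℤ):𝓞 K)*(w+1) : 𝓞 K) ∈ P2 := Ideal.mul_mem_left _ _ hw_mem2
    have hco : (1 : 𝓞 K) = ((p:𝓞 K) + ((j:ℤ):𝓞 K)*(w-1)) + (-((j:ℤ):𝓞 K)*(w+1)) := by
      linear_combination -hone
    rw [hco]
    exact Submodule.add_mem_sup h1 h2
  have hw21 : (w - 1) * (w + 1) = (p:𝓞 K)^(2*t) := by
    apply RingOfIntegers.ext
    have hdK : (d:K) = (p:K)^(2*t) + 1 := by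
      have hh : (d:ℕ) = p^(2*t) + 1 := by rw [hd, hn]; ring
      rw [hh]; push_cast; ring
    simp only [map_mul, map_sub, map_add, map_one, map_pow, hw, hcN]
    linear_combination hα + hdK
  have hPP : P1 * P2 = Ideal.span {(p:𝓞 K)} := by
    have hpow : (p:𝓞 K)^(2*t) = (p:𝓞 K) * (p:𝓞 K)^(2*t-1) := by
      rw [← pow_succ']
      congr 1
      omega
    apply le_antisymm
    · rw [Ideal.mul_le]
      intro r hr s hs
      rw [hP1def, Ideal.mem_span_pair] at hr
      rw [hP2def, Ideal.mem_span_pair] at hs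
      obtain ⟨u1, v1, h1⟩ := hr
      obtain ⟨u2, v2, h2⟩ := hs
      rw [Ideal.mem_span_singleton]
      refine ⟨u1*u2*(p:𝓞 K) + u1*v2*(w+1) + v1*u2*(w-1) + v1*v2*(p:𝓞 K)^(2*t-1), ?_⟩
      rw [← h1, ← h2]
      linear_combination v1*v2*hw21 + v1*v2*hpow
    · rw [Ideal.span_le, Set.singleton_subset_iff]
      have hpp : (p:𝓞 K)*(p:𝓞 K) ∈ P1*P2 := Ideal.mul_mem_mul hp_mem1 hp_mem2
      have hpw1 : (p:𝓞 K)*(w+1) ∈ P1*P2 := Ideal.mul_mem_mul hp_mem1 hw_mem2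
      have hw1p : (w-1)*(p:𝓞 K) ∈ P1*P2 := Ideal.mul_mem_mul hw_mem1 hp_mem2
      have key : (p:𝓞 K) = (p:𝓞 K)*(p:𝓞 K) - ((j:ℤ):𝓞 K)*((p:𝓞 K)*(w+1))
          + ((j:ℤ):𝓞 K)*((w-1)*(p:𝓞 K)) := by
        linear_combination (-(p:𝓞 K)) * hone
      rw [key]
      exact Submodule.add_mem _ (Submodule.sub_mem _ hpp (Ideal.mul_mem_left _ _ hpw1))
        (Ideal.mul_mem_left _ _ hw1p)
  have hpK0 : (p : 𝓞 K) ≠ 0 := by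
    intro h0
    have h1 : ((p:𝓞 K):K) = 0 := by rw [h0]; exact map_zero (algebraMap (𝓞 K) K)
    rw [hcN] at h1
    have : p = 0 := by exact_mod_cast h1
    omega
  have hP1ne0 : P1 ≠ 0 := by
    intro h0
    apply hpK0
    have := hp_mem1
    rw [h0] at this
    simpa using this
  -- P1² is not principal
  have hP2not : ¬ (P1^2).IsPrincipal := by
    intro hpr
    obtain ⟨γ, hγ⟩ := hpr.principal
    have hγ : P1^2 = Ideal.span {γ} := hγ
    obtain ⟨a, b, hab⟩ := hcoords γ
    -- the conjugate ideal
    have key : ∀ (u v : 𝓞 K), Ideal.span {u, -v} ≤ Ideal.span {u, v} := by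
      intro u v
      rw [Ideal.span_le]
      intro x hx
      simp only [Set.mem_insert_iff, Set.mem_singleton_iff] at hx
      rcases hx with rfl | rfl
      · exact Ideal.subset_span (by simp)
      · exact neg_mem (Ideal.subset_span (by simp))
    have hmap1 : Ideal.map σR P1 = P2 := by
      have him : Ideal.map σR P1 = Ideal.span {(p:𝓞 K), -(w+1)} := by
        rw [hP1def, Ideal.map_span, Set.image_pair]
        have h1 : σR (p:𝓞 K) = (p:𝓞 K) := map_natCast σR p
        have h2 : σR (w - 1) = -(w+1) := by rw [map_sub, map_one, hσRw]; ring
        rw [h1, h2]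
      rw [him, hP2def]
      apply le_antisymm (key _ _)
      have h3 := key (p:𝓞 K) (-(w+1))
      rwa [neg_neg] at h3
    have hmap2 : P2^2 = Ideal.span {σR γ} := by
      rw [← hmap1, ← Ideal.map_pow, hγ, Ideal.map_span, Set.image_singleton]
    have hms : Ideal.span {γ * σR γ} = Ideal.span {((p:𝓞 K))^2} := by
      rw [← Ideal.span_singleton_mul_span_singleton, ← hγ, ← hmap2, ← mul_pow, hPP,
        Ideal.span_singleton_pow]
    have hσγ : ((σR γ : 𝓞 K) : K) = (a:K) - (b:K)*α := by
      rw [hσRcoe, hab, map_add, map_mul, map_intCast, map_intCast, hσα]; ring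
    set m : ℤ := a^2 - (d:ℤ)*b^2 with hmdef
    have hNm : γ * σR γ = ((m:ℤ) : 𝓞 K) := by
      apply RingOfIntegers.ext
      simp only [map_mul, map_intCast, ← RingOfIntegers.coe_eq_algebraMap]
      rw [hab, hσγ, hmdef]
      push_cast
      linear_combination (-(b:K)^2) * hα
    rw [hNm] at hms
    have hdvd1 : ((m:ℤ):𝓞 K) ∣ (p:𝓞 K)^2 := Ideal.span_singleton_le_span_singleton.mp hms.ge
    have hdvd2 : (p:𝓞 K)^2 ∣ ((m:ℤ):𝓞 K) := Ideal.span_singleton_le_span_singleton.mp hms.le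
    obtain ⟨c, hc⟩ := hdvd1
    obtain ⟨a', b', hc'⟩ := hcoords c
    have hK1 : ((p:K))^2 = (m:K) * ((a':K) + (b':K)*α) := by
      have h5 := congrArg (fun y : 𝓞 K => (y : K)) hc
      simp only [map_pow, map_mul, map_natCast, map_intCast,
        ← RingOfIntegers.coe_eq_algebraMap] at h5
      rwa [hc'] at h5
    have huv1 := huniq (m*a' - (p:ℤ)^2) (m*b') (by push_cast; linear_combination -hK1)
    obtain ⟨e, he⟩ := hdvd2
    obtain ⟨a'', b'', he'⟩ := hcoords e
    have hK2 : (m:K) = ((p:K))^2 * ((a'':K) + (b'':K)*α) := by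
      have h5 := congrArg (fun y : 𝓞 K => (y : K)) he
      simp only [map_pow, map_mul, map_natCast, map_intCast,
        ← RingOfIntegers.coe_eq_algebraMap] at h5
      rwa [he'] at h5
    have huv2 := huniq ((p:ℤ)^2*a'' - m) ((p:ℤ)^2*b'') (by push_cast; linear_combination -hK2)
    have hma' : m * a' = (p:ℤ)^2 := by linarith [huv1.1]
    have hmeq : m = (p:ℤ)^2 * a'' := by linarith [huv2.1]
    have hp2Z : ((p:ℤ)^2) ≠ 0 := by positivity
    have haa : a'' * a' = 1 := by
      have h6 : (p:ℤ)^2 * (a'' * a') = (p:ℤ)^2 * 1 := by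
        rw [mul_one]; linear_combination hma' - a' * hmeq
      exact mul_left_cancel₀ hp2Z h6
    have hm2 : m = (p:ℤ)^2 ∨ m = -(p:ℤ)^2 := by
      rcases Int.isUnit_iff.mp (IsUnit.of_mul_eq_one (a := a') a'' (by linarith [mul_comm a'' a'])) with h | h
      · left; rw [← hma', h, mul_one]
      · right; rw [← hma', h]; ring
    by_cases hcop : IsCoprime a b
    · -- primitive solution: impossible by descent
      have hcop' : IsCoprime a ((b.natAbs : ℤ)) := by
        rcases Int.natAbs_eq b with hb | hb
        · rw [← hb]; exact hcop
        · rw [show ((b.natAbs:ℤ)) = -b by omega]; exact hcop.neg_right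
      refine no_primitive_solution (p:ℤ) (n:ℤ) (by exact_mod_cast hp3) (by exact_mod_cast hnp)
        b.natAbs a m hm2 hcop' ?_
      have hbb : ((b.natAbs:ℤ))^2 = b^2 := by rw [← Int.abs_eq_natAbs, sq_abs]
      rw [← hdZ, hbb, hmdef]
    · -- p divides γ and a unit appears: P1² = (p), contradiction
      have hm0 : m ≠ 0 := by
        intro h0
        rcases hm2 with h | h
        · rw [h0] at h; exact hp2Z h.symm
        · rw [h0] at h; exact hp2Z (by linarith)
      have hg1 : Int.gcd a b ≠ 1 := fun h => hcop (Int.isCoprime_iff_gcd_eq_one.mpr h)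
      have hg0 : Int.gcd a b ≠ 0 := by
        intro h0
        obtain ⟨ha0, hb0⟩ := Int.gcd_eq_zero_iff.mp h0
        exact hm0 (by rw [hmdef, ha0, hb0]; ring)
      obtain ⟨q, hq, hqg⟩ := Nat.exists_prime_and_dvd hg1
      have hqa : (q:ℤ) ∣ a := dvd_trans (Int.natCast_dvd_natCast.mpr hqg) (Int.gcd_dvd_left a b)
      have hqb : (q:ℤ) ∣ b := dvd_trans (Int.natCast_dvd_natCast.mpr hqg) (Int.gcd_dvd_right a b)
      have hq2m : (q:ℤ)^2 ∣ m := by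
        rw [hmdef]
        exact dvd_sub (pow_dvd_pow_of_dvd hqa 2) ((pow_dvd_pow_of_dvd hqb 2).mul_left _)
      have hq2p : (q:ℤ)^2 ∣ (p:ℤ)^2 := by
        rcases hm2 with h | h
        · rwa [h] at hq2m
        · rw [h] at hq2m; exact (dvd_neg).mp hq2m
      have hqp : q = p := by
        have h7 : (q:ℤ) ∣ (p:ℤ)^2 := dvd_trans ⟨(q:ℤ), by ring⟩ hq2p
        have h8 : (q:ℤ) ∣ (p:ℤ) := (Nat.prime_iff_prime_int.mp hq).dvd_of_dvd_pow h7
        exact (Nat.prime_dvd_prime_iff_eq hq hp).mp (Int.natCast_dvd_natCast.mp h8)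
      rw [hqp] at hqa hqb
      obtain ⟨a0, ha0⟩ := hqa
      obtain ⟨b0, hb0⟩ := hqb
      have hunit0 : a0^2 - (d:ℤ)*b0^2 = 1 ∨ a0^2 - (d:ℤ)*b0^2 = -1 := by
        rcases hm2 with h | h
        · left
          refine mul_left_cancel₀ hp2Z ?_
          rw [mul_one]
          rw [hmdef, ha0, hb0] at h
          linear_combination h
        · right
          refine mul_left_cancel₀ hp2Z ?_
          rw [hmdef, ha0, hb0] at h
          linear_combination h
      have hεu : IsUnit ((a0:𝓞 K) + (b0:𝓞 K)*w) := by
        rcases hunit0 with h | h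
        · refine IsUnit.of_mul_eq_one ((a0:𝓞 K) - (b0:𝓞 K)*w) ?_
          rw [hmulconj a0 b0, h]
          exact Int.cast_one
        · refine IsUnit.of_mul_eq_one (-((a0:𝓞 K) - (b0:𝓞 K)*w)) ?_
          rw [mul_neg, hmulconj a0 b0, h]
          simp
      have hγp : γ = (p:𝓞 K) * ((a0:𝓞 K) + (b0:𝓞 K)*w) := by
        apply RingOfIntegers.ext
        simp only [map_mul, map_add, map_natCast, map_intCast,
          ← RingOfIntegers.coe_eq_algebraMap]
        rw [hab, hw]
        rw [show (a:K) = (p:K)*(a0:K) by exact_mod_cast congrArg (fun z : ℤ => (z:K)) ha0,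
          show (b:K) = (p:K)*(b0:K) by exact_mod_cast congrArg (fun z : ℤ => (z:K)) hb0]
        ring
      have hsp : Ideal.span {γ} = Ideal.span {(p:𝓞 K)} := by
        apply Ideal.span_singleton_eq_span_singleton.mpr
        refine (Associated.symm ⟨hεu.unit, ?_⟩)
        rw [IsUnit.unit_spec]
        exact hγp.symm
      have hP1sq : P1^2 = Ideal.span {(p:𝓞 K)} := hγ.trans hsp
      have hP1p : P1 = Ideal.span {(p:𝓞 K)} := by
        have h1 : P1 * (P1 ⊔ P2) = P1 := by rw [htop, Ideal.mul_top]
        rw [Ideal.mul_sup, ← pow_two, hP1sq, hPP, sup_idem] at h1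
        exact h1.symm
      have hwm : w - 1 ∈ Ideal.span {(p:𝓞 K)} := by rw [← hP1p]; exact hw_mem1
      obtain ⟨z, hz⟩ := Ideal.mem_span_singleton'.mp hwm
      obtain ⟨a1, b1, hz'⟩ := hcoords z
      have hKz : α - 1 = ((p:K)) * ((a1:K) + (b1:K)*α) := by
        have h5 := congrArg (fun y : 𝓞 K => (y : K)) hz
        simp only [map_mul, map_sub, map_one, map_natCast, map_intCast,
          ← RingOfIntegers.coe_eq_algebraMap] at h5
        rw [hz', hw] at h5
        linear_combination -h5
      have h9 := huniq ((p:ℤ)*a1 + 1) ((p:ℤ)*b1 - 1) (by push_cast; linear_combination -hKz)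
      have h10 : (p:ℤ) ∣ 1 := ⟨-a1, by linarith [h9.1]⟩
      have h11 := Int.le_of_dvd one_pos h10
      have : (3:ℤ) ≤ (p:ℤ) := by exact_mod_cast hp3
      omega
  -- class group: the class of P1 has order 4
  have hP1sqne : P1^2 ≠ 0 := pow_ne_zero _ hP1ne0
  set XX : (Ideal (𝓞 K))⁰ := ⟨P1, mem_nonZeroDivisors_iff_ne_zero.mpr hP1ne0⟩ with hXXdef
  set X2 : (Ideal (𝓞 K))⁰ := ⟨P1^2, mem_nonZeroDivisors_iff_ne_zero.mpr hP1sqne⟩ with hX2def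
  set g : ClassGroup (𝓞 K) := ClassGroup.mk0 XX with hgdef
  have hXX2 : XX * XX = X2 := Subtype.ext (by show P1 * P1 = P1^2; rw [pow_two])
  have hg2 : g^2 = ClassGroup.mk0 X2 := by rw [hgdef, pow_two, ← MonoidHom.map_mul, hXX2]
  have hg2ne : g^2 ≠ 1 := by
    rw [hg2, hX2def]
    intro h
    exact hP2not ((ClassGroup.mk0_eq_one_iff _).mp h)
  have hcard : Fintype.card (ClassGroup (𝓞 K)) = 4 := hcl
  have hdvd4 : orderOf g ∣ 4 := hcard ▸ orderOf_dvd_card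
  have hne1 : orderOf g ≠ 1 := by
    intro h
    exact hg2ne (by rw [orderOf_eq_one_iff.mp h]; simp)
  have hne2 : orderOf g ≠ 2 := by
    intro h
    exact hg2ne (h ▸ pow_orderOf_eq_one g)
  have hord : orderOf g = 4 := by
    obtain ⟨k, hk2, hke⟩ := (Nat.dvd_prime_pow Nat.prime_two).mp
      ((show (4:ℕ) = 2^2 by norm_num) ▸ hdvd4)
    interval_cases k
    · exact absurd (by simpa using hke) hne1
    · exact absurd (by simpa using hke) hne2
    · rw [hke]; norm_num
  haveI hcyc : IsCyclic (ClassGroup (𝓞 K)) :=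
    isCyclic_of_orderOf_eq_card g (by rw [Nat.card_eq_fintype_card, hcard, hord])
  have hc1 : Nat.card (ClassGroup (𝓞 K)) = Nat.card (Multiplicative (ZMod 4)) := by
    rw [Nat.card_eq_fintype_card, hcard, Nat.card_congr (Multiplicative.toAdd), Nat.card_zmod]
  exact ⟨mulEquivOfCyclicCardEq hc1⟩
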